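/- Let τ_s > 0 and D_s > 0 with e·D_s < τ_s, and define φ: ℝ → ℝ by φ(λ) = τ_s·λ + e^{−λ·D_s}. Then φ has exactly two distinct real roots λ_1 ≠ λ_2, and both roots are negative (the overdamped sink case). -/

import Mathlib

/-- If `e·D_s < τ_s`, then `φ` has exactly two distinct real roots, both negative. -/
theorem stmt9 (τs Ds : ℝ) (hτ : 0 < τs) (hD : 0 < Ds) (h : Real.exp 1 * Ds < τs) :
    ∃ lam₁ lam₂ : ℝ, lam₁ ≠ lam₂ ∧
      τs * lam₁ + Real.exp (-lam₁ * Ds) = 0 ∧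
      τs * lam₂ + Real.exp (-lam₂ * Ds) = 0 ∧
      lam₁ < 0 ∧ lam₂ < 0 ∧
      (∀ lam : ℝ, τs * lam + Real.exp (-lam * Ds) = 0 → lam = lam₁ ∨ lam = lam₂) := by
  set f : ℝ → ℝ := fun x => τs * x + Real.exp (-x * Ds) with hf
  have hratio : 0 < τs / Ds := div_pos hτ hD
  have hexp_lt : Real.exp 1 < τs / Ds := (lt_div_iff₀ hD).2 h
  have hlog : 1 < Real.log (τs / Ds) := (Real.lt_log_iff_exp_lt hratio).2 hexp_lt
  set L : ℝ := -(Real.log (τs / Ds)) / Ds with hL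
  clear_value L
  have hLneg : L < 0 := by
    rw [hL]
    apply div_neg_of_neg_of_pos _ hD
    linarith
  -- derivative
  have hderiv : ∀ x : ℝ, HasDerivAt f (τs - Ds * Real.exp (-x * Ds)) x := by
    intro x
    have h1 : HasDerivAt (fun x : ℝ => τs * x) τs x := by
      simpa using (hasDerivAt_id x).const_mul τs
    have h2 : HasDerivAt (fun x : ℝ => -x * Ds) (-Ds) x := by
      simpa using ((hasDerivAt_id x).neg.mul_const Ds)
    have h3 : HasDerivAt (fun x : ℝ => Real.exp (-x * Ds))
        (Real.exp (-x * Ds) * (-Ds)) x := (Real.hasDerivAt_exp _).comp x h2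
    have := h1.add h3
    simpa [hf, mul_comm, sub_eq_add_neg, mul_assoc, Pi.add_def] using this
  have hcont : Continuous f := by
    apply Continuous.add (continuous_const.mul continuous_id)
    exact Real.continuous_exp.comp ((continuous_id.neg).mul continuous_const)
  -- sign of derivative
  have hderiv_neg : ∀ x ∈ Set.Iio L, τs - Ds * Real.exp (-x * Ds) < 0 := by
    intro x hx
    have hx' : x < L := hx
    have : Real.log (τs / Ds) < -x * Ds := by
      rw [hL] at hx'
      have := (lt_div_iff₀ hD).1 hx'
      linarith
    have h2 : τs / Ds < Real.exp (-x * Ds) := by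
      calc τs / Ds = Real.exp (Real.log (τs / Ds)) := (Real.exp_log hratio).symm
        _ < Real.exp (-x * Ds) := Real.exp_lt_exp.2 this
    have := (div_lt_iff₀ hD).1 h2
    nlinarith
  have hderiv_pos : ∀ x ∈ Set.Ioi L, 0 < τs - Ds * Real.exp (-x * Ds) := by
    intro x hx
    have hx' : L < x := hx
    have : -x * Ds < Real.log (τs / Ds) := by
      rw [hL] at hx'
      have := (div_lt_iff₀ hD).1 hx'
      linarith
    have h2 : Real.exp (-x * Ds) < τs / Ds := by
      calc Real.exp (-x * Ds) < Real.exp (Real.log (τs / Ds)) := Real.exp_lt_exp.2 this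
        _ = τs / Ds := Real.exp_log hratio
    have := (lt_div_iff₀ hD).1 h2
    nlinarith
  have hanti : StrictAntiOn f (Set.Iic L) := by
    apply strictAntiOn_of_deriv_neg (convex_Iic L) hcont.continuousOn
    intro x hx
    rw [interior_Iic] at hx
    rw [(hderiv x).deriv]
    exact hderiv_neg x hx
  have hmono : StrictMonoOn f (Set.Ici L) := by
    apply strictMonoOn_of_deriv_pos (convex_Ici L) hcont.continuousOn
    intro x hx
    rw [interior_Ici] at hx
    rw [(hderiv x).deriv]
    exact hderiv_pos x hx
  -- value at L
  have hfL : f L < 0 := by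
    have hexpL : Real.exp (-L * Ds) = τs / Ds := by
      rw [hL]
      rw [show -(-(Real.log (τs / Ds)) / Ds) * Ds = Real.log (τs / Ds) by field_simp]
      exact Real.exp_log hratio
    have h1 : f L = τs * L + Real.exp (-L * Ds) := rfl
    rw [h1, hexpL]
    have h2 : τs * L + τs / Ds = (τs / Ds) * (1 - Real.log (τs / Ds)) := by
      rw [hL]; field_simp; ring
    rw [h2]
    have : 1 - Real.log (τs / Ds) < 0 := by linarith
    exact mul_neg_of_pos_of_neg hratio this
  have hf0 : f 0 = 1 := by simp [hf]
  -- point A far left with f A > 0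
  obtain ⟨A, hAL, hAbound⟩ : ∃ a : ℝ, a < L ∧ a < -(4 * τs) / Ds ^ 2 :=
    ⟨min L (-(4 * τs) / Ds ^ 2) - 1,
      by linarith [min_le_left L (-(4 * τs) / Ds ^ 2)],
      by linarith [min_le_right L (-(4 * τs) / Ds ^ 2)]⟩
  have hAneg : A < 0 := lt_trans hAL hLneg
  have hfA : 0 < f A := by
    have hx : (0:ℝ) ≤ -A * Ds := by nlinarith
    have hsq : (1 + (-A * Ds) / 2) ^ 2 ≤ Real.exp (-A * Ds) := by
      have h1 : 1 + (-A * Ds) / 2 ≤ Real.exp ((-A * Ds) / 2) := by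
        linarith [Real.add_one_le_exp (-A * Ds / 2)]
      have h2 : (0:ℝ) ≤ 1 + (-A * Ds) / 2 := by linarith
      calc (1 + (-A * Ds) / 2) ^ 2 ≤ (Real.exp ((-A * Ds) / 2)) ^ 2 := by nlinarith
        _ = Real.exp (-A * Ds) := by
            rw [sq, ← Real.exp_add]; ring_nf
    have hquarter : (A * Ds) ^ 2 / 4 ≤ Real.exp (-A * Ds) := by
      have hexpand : (1 + (-A * Ds) / 2) ^ 2 = 1 + (-A * Ds) + (A * Ds) ^ 2 / 4 := by ring
      linarith
    have hAD : 4 * τs < -A * Ds ^ 2 := by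
      have := (lt_div_iff₀ (by positivity : (0:ℝ) < Ds ^ 2)).1 hAbound
      linarith
    have : τs * A + (A * Ds) ^ 2 / 4 > 0 := by
      nlinarith [mul_pos (by linarith : (0:ℝ) < -A)
        (by linarith : (0:ℝ) < -(4 * τs) - A * Ds ^ 2)]
    have : f A = τs * A + Real.exp (-A * Ds) := rfl
    rw [this]; linarith
  -- root in [A, L]
  obtain ⟨lam₁, hlam₁mem, hlam₁⟩ : ∃ x ∈ Set.Icc A L, f x = 0 := by
    have := intermediate_value_Icc' (le_of_lt hAL) hcont.continuousOn
    have h0 : (0:ℝ) ∈ Set.Icc (f L) (f A) := ⟨le_of_lt hfL, le_of_lt hfA⟩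
    obtain ⟨x, hx, hfx⟩ := this h0
    exact ⟨x, hx, hfx⟩
  obtain ⟨lam₂, hlam₂mem, hlam₂⟩ : ∃ x ∈ Set.Icc L 0, f x = 0 := by
    have := intermediate_value_Icc (le_of_lt hLneg) hcont.continuousOn
    have h0 : (0:ℝ) ∈ Set.Icc (f L) (f 0) := ⟨le_of_lt hfL, by rw [hf0]; norm_num⟩
    obtain ⟨x, hx, hfx⟩ := this h0
    exact ⟨x, hx, hfx⟩
  have hlam₁L : lam₁ < L := lt_of_le_of_ne hlam₁mem.2 (fun e => by rw [e] at hlam₁; linarith)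
  have hlam₂L : L < lam₂ := lt_of_le_of_ne hlam₂mem.1 (fun e => by rw [← e] at hlam₂; linarith)
  have hlam₂neg : lam₂ < 0 := lt_of_le_of_ne hlam₂mem.2 (fun e => by rw [e, hf0] at hlam₂; linarith)
  refine ⟨lam₁, lam₂, ne_of_lt (lt_trans hlam₁L hlam₂L), hlam₁, hlam₂,
    lt_trans hlam₁L hLneg, hlam₂neg, ?_⟩
  intro lam hlam
  rcases le_total lam L with hle | hge
  · left
    exact hanti.injOn hle (le_of_lt hlam₁L) (by show f lam = f lam₁; rw [hlam₁]; exact hlam)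
  · right
    exact hmono.injOn hge (le_of_lt hlam₂L) (by show f lam = f lam₂; rw [hlam₂]; exact hlam)
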